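/- Fix u ≥ 1, a real p with 0 < |p| < 1, and x with −u < x < 0, and let h(x) = −u/x (which is > 1). Suppose y > 1 satisfies |x+u|^p + |y+1|^p = |x−u|^p + |y−1|^p and y ≠ h(x). Then there exists y* strictly between y and h(x) such that p·((y*−1)^{p−1} − (y*+1)^{p−1})·(y − h(x)) = (1 − |x|^{−p})·(|x+u|^p − |x−u|^p). -/

import Mathlib

/-- mean-value form of the error estimate in cell H₂: for a bisector point
`(x,y)` with `−u < x < 0`, `y > 1` and `y ≠ h(x) = −u/x`, there is `y*` strictly between
`y` and `h(x)` with
`p·((y*−1)^{p−1} − (y*+1)^{p−1})·(y − h(x)) = (1 − |x|^{−p})·(|x+u|^p − |x−u|^p)`. -/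
theorem stmt12 (u p x : ℝ) (hu : 1 ≤ u) (hp0 : 0 < |p|) (hp1 : |p| < 1)
    (hx1 : -u < x) (hx2 : x < 0) (y : ℝ) (hy : 1 < y)
    (hbis : |x + u| ^ p + |y + 1| ^ p = |x - u| ^ p + |y - 1| ^ p)
    (hne : y ≠ -u / x) :
    ∃ ystar : ℝ, min y (-u / x) < ystar ∧ ystar < max y (-u / x) ∧
      p * ((ystar - 1) ^ (p - 1) - (ystar + 1) ^ (p - 1)) * (y - (-u / x))
        = (1 - |x| ^ (-p)) * (|x + u| ^ p - |x - u| ^ p) := by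
  set h : ℝ := -u / x with hh
  set w : ℝ → ℝ := fun t => (t - 1) ^ p - (t + 1) ^ p with hw
  have hnx : 0 < -x := by linarith
  have hux : 0 < u + x := by linarith
  have hux' : 0 < u - x := by linarith
  have hx0 : x ≠ 0 := hx2.ne
  have hh' : h = u / (-x) := by rw [hh]; ring
  have hh1 : 1 < h := by rw [hh', lt_div_iff₀ hnx]; linarith
  -- derivative of w at points t > 1
  have hderiv : ∀ t : ℝ, 1 < t →
      HasDerivAt w (p * ((t - 1) ^ (p - 1) - (t + 1) ^ (p - 1))) t := by
    intro t ht
    have h1 : HasDerivAt (fun s : ℝ => s - 1) 1 t := (hasDerivAt_id t).sub_const 1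
    have h2 : HasDerivAt (fun s : ℝ => s + 1) 1 t := (hasDerivAt_id t).add_const 1
    have d1 : HasDerivAt (fun s : ℝ => (s - 1) ^ p) (p * (t - 1) ^ (p - 1) * 1) t :=
      by have := (Real.hasDerivAt_rpow_const (x := t - 1) (p := p) (Or.inl (sub_pos.mpr ht).ne')).comp t h1; exact this
    have d2 : HasDerivAt (fun s : ℝ => (s + 1) ^ p) (p * (t + 1) ^ (p - 1) * 1) t :=
      by have := (Real.hasDerivAt_rpow_const (x := t + 1) (p := p) (Or.inl (by positivity : (0:ℝ) < t + 1).ne')).comp t h2; exact this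
    have := d1.sub d2
    convert this using 1
    · rfl
    · rfl
    · rfl
    ring
  -- set up the interval
  set a : ℝ := min y h with ha
  set b : ℝ := max y h with hb
  have hab : a < b := by
    rcases lt_or_gt_of_ne hne with hlt | hlt
    · rw [ha, hb, min_eq_left hlt.le, max_eq_right hlt.le]; exact hlt
    · rw [ha, hb, min_eq_right hlt.le, max_eq_left hlt.le]; exact hlt
  have ha1 : 1 < a := lt_min hy hh1
  have hcont : ContinuousOn w (Set.Icc a b) := fun t ht =>
    ((hderiv t (lt_of_lt_of_le ha1 ht.1)).continuousAt).continuousWithinAt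
  obtain ⟨c, hc, hceq⟩ := exists_hasDerivAt_eq_slope w
    (fun t => p * ((t - 1) ^ (p - 1) - (t + 1) ^ (p - 1))) hab hcont
    (fun t ht => hderiv t (lt_trans ha1 ht.1))
  refine ⟨c, hc.1, hc.2, ?_⟩
  -- slope over [a,b] equals slope over (h,y) or (y,h)
  have hslope : (w b - w a) / (b - a) = (w y - w h) / (y - h) := by
    rcases lt_or_gt_of_ne hne with hlt | hlt
    · rw [ha, hb, min_eq_left hlt.le, max_eq_right hlt.le]
      rw [div_eq_div_iff (by linarith) (sub_ne_zero.mpr hne)]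
      ring
    · rw [ha, hb, min_eq_right hlt.le, max_eq_left hlt.le]
  have hyh : y - h ≠ 0 := sub_ne_zero.mpr hne
  have key : p * ((c - 1) ^ (p - 1) - (c + 1) ^ (p - 1)) * (y - h) = w y - w h := by
    rw [hceq, hslope, div_mul_cancel₀ _ hyh]
  rw [key]
  -- now compute w y - w h
  have habs1 : |x + u| = u + x := by rw [abs_of_pos (by linarith)]; ring
  have habs2 : |x - u| = u - x := by rw [abs_of_neg (by linarith)]; ring
  have habsx : |x| = -x := abs_of_neg hx2
  have hwy : w y = (u + x) ^ p - (u - x) ^ p := by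
    have e1 : |y + 1| = y + 1 := abs_of_pos (by linarith)
    have e2 : |y - 1| = y - 1 := abs_of_pos (by linarith)
    rw [habs1, habs2, e1, e2] at hbis
    rw [hw]; dsimp only; linarith
  have hwh : w h = ((u + x) ^ p - (u - x) ^ p) * (-x) ^ (-p) := by
    have e1 : h - 1 = (u + x) / (-x) := by
      rw [eq_div_iff hnx.ne', hh]; field_simp; ring
    have e2 : h + 1 = (u - x) / (-x) := by
      rw [eq_div_iff hnx.ne', hh]; field_simp; ring
    rw [hw]; dsimp only
    rw [e1, e2, Real.div_rpow hux.le hnx.le, Real.div_rpow hux'.le hnx.le,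
      Real.rpow_neg hnx.le]
    ring
  rw [hwy, hwh, habs1, habs2, habsx]
  ring
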